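/- Let f and f̂ be probability densities represented by two tree-structured SPNs over an n-dimensional product domain that have the same structure, with k mixing weights in total. Let ε, α ∈ [0,1], and suppose that every pair of corresponding leaves fᵢ, f̂ᵢ satisfies TV(fᵢ, f̂ᵢ) ≤ ε and that every pair of corresponding mixing weights satisfies |ŵⱼ − wⱼ| ≤ α. Then TV(f, f̂) ≤ nε + kα/2. -/

import Mathlib

open MeasureTheory

inductive SPN (n : ℕ) (X : Type) : Type where
  | leaf (d : ℕ) (emb : Fin d ↪ Fin n) (g : (Fin d → X) → ℝ)
  | prod (m : ℕ) (children : Fin m → SPN n X)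
  | sum (m : ℕ) (w : Fin m → ℝ) (children : Fin m → SPN n X)

namespace SPN

variable {n : ℕ} {X : Type}

def scope : SPN n X → Finset (Fin n)
  | .leaf _ emb _ => Finset.univ.map emb
  | .prod _ c => Finset.univ.biUnion fun i => (c i).scope
  | .sum _ _ c => Finset.univ.biUnion fun i => (c i).scope

noncomputable def density : SPN n X → (Fin n → X) → ℝ
  | .leaf _ emb g => fun x => g fun j => x (emb j)
  | .prod _ c => fun x => ∏ i, (c i).density x
  | .sum _ w c => fun x => ∑ i, w i * (c i).density x

def numLeaves : SPN n X → ℕ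
  | .leaf _ _ _ => 1
  | .prod _ c => ∑ i, (c i).numLeaves
  | .sum _ _ c => ∑ i, (c i).numLeaves

def numWeights : SPN n X → ℕ
  | .leaf _ _ _ => 0
  | .prod _ c => ∑ i, (c i).numWeights
  | .sum m _ c => m + ∑ i, (c i).numWeights

def LeafT (n : ℕ) (X : Type) : Type := Σ d : ℕ, (Fin d ↪ Fin n) × ((Fin d → X) → ℝ)

instance : Inhabited (LeafT n X) := ⟨⟨0, Function.Embedding.ofIsEmpty, fun _ => 0⟩⟩

def leaves : SPN n X → List (LeafT n X)
  | .leaf d emb g => [⟨d, emb, g⟩]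
  | .prod _ c => (List.ofFn fun i => (c i).leaves).flatten
  | .sum _ _ c => (List.ofFn fun i => (c i).leaves).flatten

noncomputable def pathWeights : SPN n X → List ℝ
  | .leaf _ _ _ => [1]
  | .prod _ c => (List.ofFn fun i => (c i).pathWeights).flatten
  | .sum _ w c => (List.ofFn fun i => ((c i).pathWeights).map fun r => w i * r).flatten

def weightsList : SPN n X → List ℝ
  | .leaf _ _ _ => []
  | .prod _ c => (List.ofFn fun i => (c i).weightsList).flatten
  | .sum _ w c => (List.ofFn fun i => w i) ++ (List.ofFn fun i => (c i).weightsList).flatten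

variable [MeasurableSpace X]

def WF (ν : Measure X) [SigmaFinite ν] : SPN n X → Prop
  | .leaf d _ g => (∀ y, 0 ≤ g y) ∧ Measurable g ∧
      ∫ y, g y ∂(Measure.pi fun _ : Fin d => ν) = 1
  | .prod m c => 0 < m ∧ (∀ i, (c i).WF ν) ∧
      ∀ i j, i ≠ j → Disjoint ((c i).scope) ((c j).scope)
  | .sum m w c => 0 < m ∧ (∀ i, (c i).WF ν) ∧ (∀ i j, (c i).scope = (c j).scope) ∧
      (∀ i, 0 ≤ w i) ∧ ∑ i, w i = 1

inductive SameStruct : SPN n X → SPN n X → Prop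
  | leaf (d : ℕ) (emb : Fin d ↪ Fin n) (g g' : (Fin d → X) → ℝ) :
      SameStruct (.leaf d emb g) (.leaf d emb g')
  | prod (m : ℕ) (c c' : Fin m → SPN n X) (h : ∀ i, SameStruct (c i) (c' i)) :
      SameStruct (.prod m c) (.prod m c')
  | sum (m : ℕ) (w w' : Fin m → ℝ) (c c' : Fin m → SPN n X)
      (h : ∀ i, SameStruct (c i) (c' i)) :
      SameStruct (.sum m w c) (.sum m w' c')

noncomputable def leafTV (ν : Measure X) [SigmaFinite ν] (L L' : LeafT n X) : ℝ :=
  if h : L'.1 = L.1 then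
    (1/2) * ∫ y, |L.2.2 y - L'.2.2 fun j => y (Fin.cast h j)|
      ∂(Measure.pi fun _ : Fin L.1 => ν)
  else 1

noncomputable def tv (ν : Measure X) [SigmaFinite ν] (f g : (Fin n → X) → ℝ) : ℝ :=
  (1/2) * ∫ x, |f x - g x| ∂(Measure.pi fun _ : Fin n => ν)

end SPN

namespace SPNAux

open SPN MeasureTheory ENNReal

variable {n : ℕ} {X : Type} [MeasurableSpace X]

/-- Patch a partial point on coordinates in `S` with a default point `x₀`. -/
def patch (S : Finset (Fin n)) (x₀ : Fin n → X) (y : {i // i ∈ S} → X) : Fin n → X :=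
  fun i => if h : i ∈ S then y ⟨i, h⟩ else x₀ i

lemma measurable_patch (S : Finset (Fin n)) (x₀ : Fin n → X) :
    Measurable (patch S x₀) := by
  apply measurable_pi_lambda
  intro i
  by_cases h : i ∈ S
  · simpa [patch, h] using measurable_pi_apply (⟨i, h⟩ : {i // i ∈ S})
  · simpa [patch, h] using measurable_const

/-- A function on the full product space depends only on coordinates in `S`. -/
def DOn {β : Type*} (S : Finset (Fin n)) (φ : (Fin n → X) → β) : Prop :=
  ∀ x y : Fin n → X, (∀ i ∈ S, x i = y i) → φ x = φ y

lemma DOn.mono {β : Type*} {S T : Finset (Fin n)} {φ : (Fin n → X) → β}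
    (hST : S ⊆ T) (h : DOn S φ) : DOn T φ :=
  fun x y hxy => h x y fun i hi => hxy i (hST hi)

lemma DOn.comp {β γ : Type*} {S : Finset (Fin n)} {φ : (Fin n → X) → β}
    (h : DOn S φ) (f : β → γ) : DOn S (fun x => f (φ x)) :=
  fun x y hxy => congrArg f (h x y hxy)

/-- Integral of a function against the product measure on coordinates in `S`,
after patching with `x₀`. -/
noncomputable def J (ν : Measure X) (x₀ : Fin n → X) (S : Finset (Fin n))
    (φ : (Fin n → X) → ℝ≥0∞) : ℝ≥0∞ :=
  ∫⁻ y, φ (patch S x₀ y) ∂(Measure.pi fun _ : {i // i ∈ S} => ν)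

lemma J_mono {ν : Measure X} {x₀ : Fin n → X} {S : Finset (Fin n)}
    {φ ψ : (Fin n → X) → ℝ≥0∞} (h : ∀ x, φ x ≤ ψ x) : J ν x₀ S φ ≤ J ν x₀ S ψ :=
  lintegral_mono fun y => h _

variable (ν : Measure X) [SigmaFinite ν] (x₀ : Fin n → X)

lemma J_union_mul {S T : Finset (Fin n)} (hd : Disjoint S T)
    {φ ψ : (Fin n → X) → ℝ≥0∞} (hφm : Measurable φ) (hψm : Measurable ψ)
    (hφ : DOn S φ) (hψ : DOn T ψ) :
    J ν x₀ (S ∪ T) (fun x => φ x * ψ x) = J ν x₀ S φ * J ν x₀ T ψ := by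
  classical
  set U : Finset (Fin n) := S ∪ T with hU
  let p : {i // i ∈ U} → Prop := fun i => (i : Fin n) ∈ S
  let q₁ : {i // i ∈ S} ≃ {x : {i // i ∈ U} // p x} :=
    { toFun := fun i => ⟨⟨i.1, Finset.mem_union_left _ i.2⟩, i.2⟩
      invFun := fun x => ⟨x.1.1, x.2⟩
      left_inv := fun i => rfl
      right_inv := fun x => rfl }
  let q₂ : {i // i ∈ T} ≃ {x : {i // i ∈ U} // ¬ p x} :=
    { toFun := fun i => ⟨⟨i.1, Finset.mem_union_right _ i.2⟩,
        fun hi => (Finset.disjoint_left.mp hd hi) i.2⟩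
      invFun := fun x => ⟨x.1.1, by
        rcases Finset.mem_union.mp x.1.2 with h | h
        · exact absurd h x.2
        · exact h⟩
      left_inv := fun i => rfl
      right_inv := fun x => rfl }
  let E₁ := MeasurableEquiv.piCongrLeft (fun _ : {x : {i // i ∈ U} // p x} => X) q₁
  let E₂ := MeasurableEquiv.piCongrLeft (fun _ : {x : {i // i ∈ U} // ¬ p x} => X) q₂
  let P := MeasurableEquiv.piEquivPiSubtypeProd (fun _ : {i // i ∈ U} => X) p
  have MP : MeasurePreserving (⇑P) (Measure.pi fun _ : {i // i ∈ U} => ν)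
      ((Measure.pi fun _ : {x : {i // i ∈ U} // p x} => ν).prod
       (Measure.pi fun _ : {x : {i // i ∈ U} // ¬ p x} => ν)) :=
    measurePreserving_piEquivPiSubtypeProd (fun _ : {i // i ∈ U} => ν) p
  have M1 : MeasurePreserving (⇑E₁) (Measure.pi fun _ : {i // i ∈ S} => ν)
      (Measure.pi fun _ : {x : {i // i ∈ U} // p x} => ν) :=
    measurePreserving_piCongrLeft (fun _ => ν) q₁
  have M2 : MeasurePreserving (⇑E₂) (Measure.pi fun _ : {i // i ∈ T} => ν)
      (Measure.pi fun _ : {x : {i // i ∈ U} // ¬ p x} => ν) :=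
    measurePreserving_piCongrLeft (fun _ => ν) q₂
  have key : ∀ (a : {i // i ∈ S} → X) (b : {i // i ∈ T} → X),
      φ (patch U x₀ (P.symm (E₁ a, E₂ b))) = φ (patch S x₀ a) ∧
      ψ (patch U x₀ (P.symm (E₁ a, E₂ b))) = ψ (patch T x₀ b) := by
    intro a b
    constructor
    · apply hφ
      intro i hi
      have hiU : i ∈ U := Finset.mem_union_left _ hi
      have h1 : patch U x₀ (P.symm (E₁ a, E₂ b)) i = (P.symm (E₁ a, E₂ b)) ⟨i, hiU⟩ := by
        simp [patch, hiU]
      rw [h1]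
      have h2 : (P.symm (E₁ a, E₂ b)) ⟨i, hiU⟩
          = (E₁ a) ⟨⟨i, hiU⟩, hi⟩ := by
        have hc : (P.symm (E₁ a, E₂ b)) ⟨i, hiU⟩
            = (Equiv.piEquivPiSubtypeProd p (fun _ => X)).symm (E₁ a, E₂ b) ⟨i, hiU⟩ := rfl
        rw [hc, Equiv.piEquivPiSubtypeProd_symm_apply]
        exact dif_pos hi
      rw [h2]
      have h3 : (⟨⟨i, hiU⟩, hi⟩ : {x : {i // i ∈ U} // p x}) = q₁ ⟨i, hi⟩ := rfl
      rw [h3]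
      have h4 : (E₁ a) (q₁ ⟨i, hi⟩) = a ⟨i, hi⟩ :=
        Equiv.piCongrLeft_apply_apply (fun _ => X) q₁ a ⟨i, hi⟩
      rw [h4]
      simp [patch, hi]
    · apply hψ
      intro i hi
      have hiU : i ∈ U := Finset.mem_union_right _ hi
      have hnp : ¬ ((⟨i, hiU⟩ : {i // i ∈ U}) : Fin n) ∈ S :=
        fun h => (Finset.disjoint_left.mp hd h) hi
      have h1 : patch U x₀ (P.symm (E₁ a, E₂ b)) i = (P.symm (E₁ a, E₂ b)) ⟨i, hiU⟩ := by
        simp [patch, hiU]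
      rw [h1]
      have h2 : (P.symm (E₁ a, E₂ b)) ⟨i, hiU⟩
          = (E₂ b) ⟨⟨i, hiU⟩, hnp⟩ := by
        have hc : (P.symm (E₁ a, E₂ b)) ⟨i, hiU⟩
            = (Equiv.piEquivPiSubtypeProd p (fun _ => X)).symm (E₁ a, E₂ b) ⟨i, hiU⟩ := rfl
        rw [hc, Equiv.piEquivPiSubtypeProd_symm_apply]
        exact dif_neg hnp
      rw [h2]
      have h3 : (⟨⟨i, hiU⟩, hnp⟩ : {x : {i // i ∈ U} // ¬ p x}) = q₂ ⟨i, hi⟩ := rfl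
      rw [h3]
      have h4 : (E₂ b) (q₂ ⟨i, hi⟩) = b ⟨i, hi⟩ :=
        Equiv.piCongrLeft_apply_apply (fun _ => X) q₂ b ⟨i, hi⟩
      rw [h4]
      simp [patch, hi]
  calc J ν x₀ U (fun x => φ x * ψ x)
      = ∫⁻ z, (fun x => φ x * ψ x) (patch U x₀ (P.symm z))
        ∂((Measure.pi fun _ : {x : {i // i ∈ U} // p x} => ν).prod
          (Measure.pi fun _ : {x : {i // i ∈ U} // ¬ p x} => ν)) := by
        rw [J]
        rw [← (MP.symm P).lintegral_comp_emb P.symm.measurableEmbedding]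
    _ = ∫⁻ z, (fun x => φ x * ψ x) (patch U x₀ (P.symm (E₁ z.1, E₂ z.2)))
        ∂((Measure.pi fun _ : {i // i ∈ S} => ν).prod
          (Measure.pi fun _ : {i // i ∈ T} => ν)) := by
        rw [← (M1.prod M2).lintegral_comp_emb
          (MeasurableEmbedding.prodMap E₁.measurableEmbedding E₂.measurableEmbedding)]
        rfl
    _ = ∫⁻ z, φ (patch S x₀ z.1) * ψ (patch T x₀ z.2)
        ∂((Measure.pi fun _ : {i // i ∈ S} => ν).prod
          (Measure.pi fun _ : {i // i ∈ T} => ν)) := by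
        congr 1
        funext z
        simp only []
        rw [(key z.1 z.2).1, (key z.1 z.2).2]
    _ = J ν x₀ S φ * J ν x₀ T ψ := by
        rw [J, J]
        exact lintegral_prod_mul
          ((hφm.comp (measurable_patch S x₀)).aemeasurable)
          ((hψm.comp (measurable_patch T x₀)).aemeasurable)

end SPNAux

namespace SPNAux

open SPN MeasureTheory ENNReal

variable {n : ℕ} {X : Type} [MeasurableSpace X]

lemma scope_biUnion_subset_prod {m : ℕ} (c : Fin m → SPN n X) (i : Fin m) :
    (c i).scope ⊆ (SPN.prod m c).scope := by
  intro x hx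
  simp only [SPN.scope, Finset.mem_biUnion]
  exact ⟨i, Finset.mem_univ i, hx⟩

lemma scope_biUnion_subset_sum {m : ℕ} (w : Fin m → ℝ) (c : Fin m → SPN n X) (i : Fin m) :
    (c i).scope ⊆ (SPN.sum m w c).scope := by
  intro x hx
  simp only [SPN.scope, Finset.mem_biUnion]
  exact ⟨i, Finset.mem_univ i, hx⟩

lemma dOn_density (t : SPN n X) : DOn t.scope t.density := by
  induction t with
  | leaf d emb g =>
    intro x y hxy
    simp only [SPN.density]
    congr 1
    funext j
    exact hxy (emb j) (by simp [SPN.scope])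
  | prod m c ih =>
    intro x y hxy
    simp only [SPN.density]
    exact Finset.prod_congr rfl fun i _ =>
      ih i x y fun j hj => hxy j (scope_biUnion_subset_prod c i hj)
  | sum m w c ih =>
    intro x y hxy
    simp only [SPN.density]
    exact Finset.sum_congr rfl fun i _ => by
      rw [ih i x y fun j hj => hxy j (scope_biUnion_subset_sum w c i hj)]

variable {ν : Measure X} [SigmaFinite ν]

lemma measurable_density {t : SPN n X} (ht : t.WF ν) : Measurable t.density := by
  induction t with
  | leaf d emb g =>
    exact ht.2.1.comp (measurable_pi_lambda _ fun j => measurable_pi_apply _)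
  | prod m c ih =>
    exact Finset.measurable_prod _ fun i _ => ih i (ht.2.1 i)
  | sum m w c ih =>
    exact Finset.measurable_sum _ fun i _ => (measurable_const.mul (ih i (ht.2.1 i)))

lemma density_nonneg {t : SPN n X} (ht : t.WF ν) (x : Fin n → X) : 0 ≤ t.density x := by
  induction t with
  | leaf d emb g => exact ht.1 _
  | prod m c ih => exact Finset.prod_nonneg fun i _ => ih i (ht.2.1 i)
  | sum m w c ih =>
    exact Finset.sum_nonneg fun i _ => mul_nonneg (ht.2.2.2.1 i) (ih i (ht.2.1 i))

lemma sameStruct_scope {t t' : SPN n X} (h : SameStruct t t') : t'.scope = t.scope := by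
  induction h with
  | leaf d emb g g' => rfl
  | prod m c c' h ih => simp only [SPN.scope]; exact Finset.biUnion_congr rfl fun i _ => ih i
  | sum m w w' c c' h ih => simp only [SPN.scope]; exact Finset.biUnion_congr rfl fun i _ => ih i

lemma scope_sum_child {m : ℕ} {w : Fin m → ℝ} {c : Fin m → SPN n X}
    (hm : 0 < m) (hs : ∀ i j, (c i).scope = (c j).scope) (i : Fin m) :
    (c i).scope = (SPN.sum m w c).scope := by
  apply Finset.Subset.antisymm
  · exact scope_biUnion_subset_sum w c i
  · intro x hx
    simp only [SPN.scope, Finset.mem_biUnion] at hx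
    rcases hx with ⟨j, _, hj⟩
    rw [hs i j]; exact hj

variable (ν) (x₀ : Fin n → X)

lemma J_empty (φ : (Fin n → X) → ℝ≥0∞) (c : ℝ≥0∞) (hφ : ∀ x, φ x = c) :
    J ν x₀ (∅ : Finset (Fin n)) φ = c := by
  rw [J]
  have : IsEmpty {i : Fin n // i ∈ (∅ : Finset (Fin n))} :=
    ⟨fun i => Finset.notMem_empty i.1 i.2⟩
  rw [Measure.pi_of_empty]
  simp [hφ]

lemma J_biUnion_prod {m : ℕ} (S : Fin m → Finset (Fin n))
    (hd : ∀ i j, i ≠ j → Disjoint (S i) (S j))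
    (φ : Fin m → (Fin n → X) → ℝ≥0∞) (hm : ∀ i, Measurable (φ i))
    (hD : ∀ i, DOn (S i) (φ i)) :
    J ν x₀ (Finset.univ.biUnion S) (fun x => ∏ i, φ i x) = ∏ i, J ν x₀ (S i) (φ i) := by
  induction m with
  | zero =>
    have : Finset.univ.biUnion S = (∅ : Finset (Fin n)) := by simp
    rw [this]
    rw [J_empty ν x₀ _ 1 (fun x => by simp)]
    simp
  | succ m ih =>
    have hsplit : Finset.univ.biUnion S
        = S 0 ∪ Finset.univ.biUnion (fun i : Fin m => S i.succ) := by
      ext x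
      simp only [Finset.mem_biUnion, Finset.mem_union, Finset.mem_univ, true_and]
      constructor
      · rintro ⟨i, hi⟩
        rcases Fin.eq_zero_or_eq_succ i with rfl | ⟨j, rfl⟩
        · exact Or.inl hi
        · exact Or.inr ⟨j, hi⟩
      · rintro (h | ⟨j, hj⟩)
        · exact ⟨0, h⟩
        · exact ⟨j.succ, hj⟩
    have hDtail : DOn (Finset.univ.biUnion fun i : Fin m => S i.succ)
        (fun x => ∏ i : Fin m, φ i.succ x) := by
      intro x y hxy
      exact Finset.prod_congr rfl fun i _ => hD i.succ x y fun j hj =>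
        hxy j (Finset.subset_biUnion_of_mem _ (Finset.mem_univ i) hj)
    have hdisj : Disjoint (S 0) (Finset.univ.biUnion fun i : Fin m => S i.succ) := by
      rw [Finset.disjoint_biUnion_right]
      exact fun i _ => hd 0 i.succ (Fin.succ_ne_zero i).symm
    have hptwise : (fun x => ∏ i : Fin (m+1), φ i x)
        = fun x => φ 0 x * ∏ i : Fin m, φ i.succ x := by
      funext x; exact Fin.prod_univ_succ _
    rw [hsplit, hptwise]
    rw [J_union_mul ν x₀ hdisj (hm 0)
      (Finset.measurable_prod _ fun i _ => hm i.succ) (hD 0) hDtail]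
    rw [ih (fun i => S i.succ) (fun i j hij => hd i.succ j.succ (by simpa using hij))
      (fun i => φ i.succ) (fun i => hm i.succ) (fun i => hD i.succ)]
    rw [Fin.prod_univ_succ]

lemma J_map_emb {d : ℕ} (emb : Fin d ↪ Fin n) (φ : (Fin d → X) → ℝ≥0∞) :
    J ν x₀ (Finset.univ.map emb) (fun x => φ (fun j => x (emb j)))
      = ∫⁻ z, φ z ∂(Measure.pi fun _ : Fin d => ν) := by
  classical
  set S : Finset (Fin n) := Finset.univ.map emb with hS
  have hmem : ∀ j : Fin d, emb j ∈ S := fun j => by simp [hS]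
  let e : Fin d ≃ {i // i ∈ S} :=
    { toFun := fun j => ⟨emb j, hmem j⟩
      invFun := fun i => (Finset.mem_map.mp i.2).choose
      left_inv := fun j => emb.injective (by
        have := (Finset.mem_map.mp (hmem j)).choose_spec.2
        exact this)
      right_inv := fun i => Subtype.ext (by
        have := (Finset.mem_map.mp i.2).choose_spec.2
        exact this) }
  have MP : MeasurePreserving (⇑(MeasurableEquiv.piCongrLeft (fun _ : {i // i ∈ S} => X) e))
      (Measure.pi fun _ : Fin d => ν) (Measure.pi fun _ : {i // i ∈ S} => ν) :=
    measurePreserving_piCongrLeft (fun _ => ν) e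
  rw [J, ← MP.lintegral_comp_emb
    (MeasurableEquiv.piCongrLeft (fun _ : {i // i ∈ S} => X) e).measurableEmbedding]
  apply lintegral_congr
  intro z
  congr 1
  funext j
  have h1 : patch S x₀ ((MeasurableEquiv.piCongrLeft (fun _ => X) e) z) (emb j)
      = (MeasurableEquiv.piCongrLeft (fun _ : {i // i ∈ S} => X) e) z ⟨emb j, hmem j⟩ := by
    simp [patch, hmem j]
  rw [h1]
  have h2 : (⟨emb j, hmem j⟩ : {i // i ∈ S}) = e j := rfl
  rw [h2]
  exact Equiv.piCongrLeft_apply_apply (fun _ => X) e z j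

lemma integrable_of_integral_eq_one {α : Type*} [MeasurableSpace α] {μ : Measure α}
    {g : α → ℝ} (h : ∫ y, g y ∂μ = 1) : Integrable g μ := by
  by_contra hc
  rw [integral_undef hc] at h
  exact zero_ne_one h

lemma J_density_one {t : SPN n X} (ht : t.WF ν) :
    J ν x₀ t.scope (fun x => ENNReal.ofReal (t.density x)) = 1 := by
  induction t with
  | leaf d emb g =>
    obtain ⟨hg0, hgm, hgi⟩ := ht
    show J ν x₀ (Finset.univ.map emb)
      (fun x => ENNReal.ofReal (g fun j => x (emb j))) = 1
    rw [J_map_emb ν x₀ emb (fun z => ENNReal.ofReal (g z))]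
    rw [← ofReal_integral_eq_lintegral_ofReal (integrable_of_integral_eq_one hgi)
      (Filter.Eventually.of_forall hg0)]
    rw [hgi]; exact ENNReal.ofReal_one
  | prod m c ih =>
    obtain ⟨hm, hwf, hdisj⟩ := ht
    show J ν x₀ (Finset.univ.biUnion fun i => (c i).scope)
      (fun x => ENNReal.ofReal ((SPN.prod m c).density x)) = 1
    have hpt : (fun x => ENNReal.ofReal ((SPN.prod m c).density x))
        = fun x => ∏ i, ENNReal.ofReal ((c i).density x) := by
      funext x
      simp only [SPN.density]
      exact ENNReal.ofReal_prod_of_nonneg fun i _ => density_nonneg (hwf i) x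
    rw [hpt]
    rw [J_biUnion_prod ν x₀ _ hdisj _
      (fun i => (measurable_density (hwf i)).ennreal_ofReal)
      (fun i => (dOn_density (c i)).comp ENNReal.ofReal)]
    rw [Finset.prod_congr rfl fun i _ => ih i (hwf i)]
    simp
  | sum m w c ih =>
    obtain ⟨hm, hwf, hsc, hw0, hw1⟩ := ht
    have hpt : ∀ x, ENNReal.ofReal ((SPN.sum m w c).density x)
        = ∑ i, ENNReal.ofReal (w i) * ENNReal.ofReal ((c i).density x) := by
      intro x
      simp only [SPN.density]
      rw [ENNReal.ofReal_sum_of_nonneg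
        (fun i _ => mul_nonneg (hw0 i) (density_nonneg (hwf i) x))]
      exact Finset.sum_congr rfl fun i _ =>
        ENNReal.ofReal_mul (hw0 i)
    rw [J]
    rw [lintegral_congr fun y => hpt _]
    rw [lintegral_finset_sum _ (fun i _ => by
      exact (measurable_const.mul
        (((measurable_density (hwf i)).ennreal_ofReal).comp
          (measurable_patch _ x₀))))]
    have : ∀ i : Fin m, ∫⁻ y, ENNReal.ofReal (w i)
          * ENNReal.ofReal ((c i).density (patch (SPN.sum m w c).scope x₀ y))
          ∂(Measure.pi fun _ : {j // j ∈ (SPN.sum m w c).scope} => ν)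
        = ENNReal.ofReal (w i) := by
      intro i
      rw [lintegral_const_mul _
        (show Measurable fun y => ENNReal.ofReal
            ((c i).density (patch (SPN.sum m w c).scope x₀ y)) from
          ((measurable_density (hwf i)).ennreal_ofReal).comp (measurable_patch _ x₀))]
      have hJ : J ν x₀ (SPN.sum m w c).scope
          (fun x => ENNReal.ofReal ((c i).density x)) = 1 := by
        rw [← scope_sum_child hm hsc i]
        exact ih i (hwf i)
      rw [show (∫⁻ y, ENNReal.ofReal ((c i).density (patch (SPN.sum m w c).scope x₀ y))
          ∂(Measure.pi fun _ : {j // j ∈ (SPN.sum m w c).scope} => ν))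
        = J ν x₀ (SPN.sum m w c).scope (fun x => ENNReal.ofReal ((c i).density x)) from rfl]
      rw [hJ, mul_one]
    rw [Finset.sum_congr rfl fun i _ => this i]
    rw [← ENNReal.ofReal_sum_of_nonneg fun i _ => hw0 i]
    rw [hw1]; exact ENNReal.ofReal_one

end SPNAux

namespace SPNAux

open SPN MeasureTheory ENNReal

variable {n : ℕ} {X : Type} [MeasurableSpace X]

lemma length_flatten_ofFn {γ : Type*} {m : ℕ} (A : Fin m → List γ) :
    (List.ofFn A).flatten.length = ∑ i, (A i).length := by
  simp [List.length_flatten, List.map_ofFn, List.sum_ofFn, Function.comp]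

lemma zip_flatten_ofFn {γ δ : Type*} :
    ∀ (m : ℕ) (A : Fin m → List γ) (B : Fin m → List δ),
    (∀ i, (A i).length = (B i).length) →
    (List.ofFn A).flatten.zip (List.ofFn B).flatten
      = (List.ofFn fun i => (A i).zip (B i)).flatten := by
  intro m
  induction m with
  | zero => intro A B h; simp
  | succ m ih =>
    intro A B h
    rw [List.ofFn_succ (f := A), List.ofFn_succ (f := B),
      List.ofFn_succ (f := fun i => (A i).zip (B i))]
    simp only [List.flatten_cons]
    rw [List.zip_append (h 0), ih _ _ (fun i => h i.succ)]

lemma sameStruct_leaves_length {t t' : SPN n X} (h : SameStruct t t') :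
    t.leaves.length = t'.leaves.length := by
  induction h with
  | leaf d emb g g' => rfl
  | prod m c c' h ih =>
    show (List.ofFn fun i => (c i).leaves).flatten.length
      = (List.ofFn fun i => (c' i).leaves).flatten.length
    rw [length_flatten_ofFn, length_flatten_ofFn]
    exact Finset.sum_congr rfl fun i _ => ih i
  | sum m w w' c c' h ih =>
    show (List.ofFn fun i => (c i).leaves).flatten.length
      = (List.ofFn fun i => (c' i).leaves).flatten.length
    rw [length_flatten_ofFn, length_flatten_ofFn]
    exact Finset.sum_congr rfl fun i _ => ih i

lemma sameStruct_weights_length {t t' : SPN n X} (h : SameStruct t t') :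
    t.weightsList.length = t'.weightsList.length := by
  induction h with
  | leaf d emb g g' => rfl
  | prod m c c' h ih =>
    show (List.ofFn fun i => (c i).weightsList).flatten.length
      = (List.ofFn fun i => (c' i).weightsList).flatten.length
    rw [length_flatten_ofFn, length_flatten_ofFn]
    exact Finset.sum_congr rfl fun i _ => ih i
  | sum m w w' c c' h ih =>
    show ((List.ofFn fun i => w i) ++ (List.ofFn fun i => (c i).weightsList).flatten).length
      = ((List.ofFn fun i => w' i) ++ (List.ofFn fun i => (c' i).weightsList).flatten).length
    rw [List.length_append, List.length_append, length_flatten_ofFn, length_flatten_ofFn]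
    simp only [List.length_ofFn]
    congr 1
    exact Finset.sum_congr rfl fun i _ => ih i

lemma mem_zip_ofFn {m : ℕ} (w w' : Fin m → ℝ) (i : Fin m) :
    (w i, w' i) ∈ (List.ofFn w).zip (List.ofFn w') := by
  have hlen : (i : ℕ) < ((List.ofFn w).zip (List.ofFn w')).length := by
    simp [List.length_zip, i.2]
  have : ((List.ofFn w).zip (List.ofFn w'))[(i : ℕ)] = (w i, w' i) := by
    rw [List.getElem_zip, List.getElem_ofFn, List.getElem_ofFn]
  rw [← this]
  exact List.getElem_mem hlen

lemma abs_prod_sub_prod :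
    ∀ (m : ℕ) (F G : Fin m → ℝ), (∀ i, 0 ≤ F i) → (∀ i, 0 ≤ G i) →
    |∏ i, F i - ∏ i, G i| ≤
      ∑ i, ∏ j, (if j < i then G j else if j = i then |F j - G j| else F j) := by
  intro m
  induction m with
  | zero => intro F G _ _; simp
  | succ m ih =>
    intro F G hF hG
    have hP : (0:ℝ) ≤ ∏ j : Fin m, F j.succ := Finset.prod_nonneg fun j _ => hF j.succ
    have key : |∏ i, F i - ∏ i, G i|
        ≤ |F 0 - G 0| * ∏ j : Fin m, F j.succ
          + G 0 * |∏ j : Fin m, F j.succ - ∏ j : Fin m, G j.succ| := by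
      rw [Fin.prod_univ_succ F, Fin.prod_univ_succ G]
      have : F 0 * ∏ j : Fin m, F j.succ - G 0 * ∏ j : Fin m, G j.succ
          = (F 0 - G 0) * ∏ j : Fin m, F j.succ
            + G 0 * (∏ j : Fin m, F j.succ - ∏ j : Fin m, G j.succ) := by ring
      rw [this]
      calc |(F 0 - G 0) * ∏ j : Fin m, F j.succ
            + G 0 * (∏ j : Fin m, F j.succ - ∏ j : Fin m, G j.succ)|
          ≤ |(F 0 - G 0) * ∏ j : Fin m, F j.succ|
            + |G 0 * (∏ j : Fin m, F j.succ - ∏ j : Fin m, G j.succ)| := abs_add_le _ _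
        _ = |F 0 - G 0| * ∏ j : Fin m, F j.succ
            + G 0 * |∏ j : Fin m, F j.succ - ∏ j : Fin m, G j.succ| := by
            rw [abs_mul, abs_mul, abs_of_nonneg hP, abs_of_nonneg (hG 0)]
    have ihs := ih (fun j => F j.succ) (fun j => G j.succ)
      (fun j => hF j.succ) (fun j => hG j.succ)
    have hRHS : ∑ i : Fin (m+1), ∏ j, (if j < i then G j else if j = i then |F j - G j| else F j)
        = |F 0 - G 0| * ∏ j : Fin m, F j.succ
          + G 0 * ∑ i : Fin m, ∏ j : Fin m,
            (if j < i then G j.succ else if j = i then |F j.succ - G j.succ| else F j.succ) := by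
      rw [Fin.sum_univ_succ]
      congr 1
      · rw [Fin.prod_univ_succ]
        have h00 : (if (0 : Fin (m+1)) < 0 then G 0 else if (0:Fin (m+1)) = 0 then |F 0 - G 0| else F 0)
            = |F 0 - G 0| := by simp
        have hs : (∏ j : Fin m, (if j.succ < (0:Fin (m+1)) then G j.succ
              else if j.succ = (0:Fin (m+1)) then |F j.succ - G j.succ| else F j.succ))
            = ∏ j : Fin m, F j.succ :=
          Finset.prod_congr rfl fun j _ => by
            rw [if_neg (by simp [Fin.lt_def]), if_neg (Fin.succ_ne_zero j)]
        rw [h00, hs]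
      · rw [Finset.mul_sum]
        apply Finset.sum_congr rfl
        intro i _
        rw [Fin.prod_univ_succ]
        have hs : (∏ j : Fin m, (if j.succ < i.succ then G j.succ
              else if j.succ = i.succ then |F j.succ - G j.succ| else F j.succ))
            = ∏ j : Fin m, (if j < i then G j.succ
              else if j = i then |F j.succ - G j.succ| else F j.succ) :=
          Finset.prod_congr rfl fun j _ => by
            simp only [Fin.succ_lt_succ_iff, Fin.succ_inj]
        rw [if_pos (Fin.succ_pos i), hs]
    rw [hRHS]
    calc |∏ i, F i - ∏ i, G i|
        ≤ |F 0 - G 0| * ∏ j : Fin m, F j.succ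
          + G 0 * |∏ j : Fin m, F j.succ - ∏ j : Fin m, G j.succ| := key
      _ ≤ |F 0 - G 0| * ∏ j : Fin m, F j.succ
          + G 0 * ∑ i : Fin m, ∏ j : Fin m,
            (if j < i then G j.succ else if j = i then |F j.succ - G j.succ| else F j.succ) := by
          gcongr
          exact hG 0

lemma density_one_of_dzero {ν : Measure X} [SigmaFinite ν] {g : (Fin 0 → X) → ℝ}
    (hm : Measurable g) (hi : ∫ y, g y ∂(Measure.pi fun _ : Fin 0 => ν) = 1)
    (z : Fin 0 → X) : g z = 1 := by
  rw [Measure.pi_of_empty] at hi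
  rw [integral_dirac' _ _ hm.stronglyMeasurable] at hi
  rw [Subsingleton.elim z (fun a => isEmptyElim a)]
  exact hi

end SPNAux

namespace SPNAux

open SPN MeasureTheory ENNReal

variable {n : ℕ} {X : Type} [MeasurableSpace X]
variable (ν : Measure X) [SigmaFinite ν] (x₀ : Fin n → X)

lemma main_bound {ε α : ℝ} (hε : 0 ≤ ε) (hα : 0 ≤ α)
    {t t' : SPN n X} (hs : SameStruct t t') :
    t.WF ν → t'.WF ν →
    (∀ p ∈ t.leaves.zip t'.leaves, leafTV ν p.1 p.2 ≤ ε) →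
    (∀ p ∈ t.weightsList.zip t'.weightsList, |p.2 - p.1| ≤ α) →
    J ν x₀ t.scope (fun x => ENNReal.ofReal |t.density x - t'.density x|)
      ≤ ENNReal.ofReal (2 * t.scope.card * ε + t.numWeights * α) := by
  induction hs with
  | leaf d emb g g' =>
    intro hwf hwf' hL _
    obtain ⟨hg0, hgm, hgi⟩ := hwf
    obtain ⟨hg'0, hg'm, hg'i⟩ := hwf'
    have hcard : (SPN.leaf d emb g : SPN n X).scope.card = d := by
      simp [SPN.scope]
    have hnw : (SPN.leaf d emb g : SPN n X).numWeights = 0 := rfl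
    have hJ : J ν x₀ (SPN.leaf d emb g : SPN n X).scope
        (fun x => ENNReal.ofReal |(SPN.leaf d emb g : SPN n X).density x
          - (SPN.leaf d emb g' : SPN n X).density x|)
        = ∫⁻ z, ENNReal.ofReal |g z - g' z| ∂(Measure.pi fun _ : Fin d => ν) :=
      J_map_emb ν x₀ emb (fun z => ENNReal.ofReal |g z - g' z|)
    have Ig : Integrable g (Measure.pi fun _ : Fin d => ν) := integrable_of_integral_eq_one hgi
    have Ig' : Integrable g' (Measure.pi fun _ : Fin d => ν) := integrable_of_integral_eq_one hg'i
    have Iabs : Integrable (fun z => |g z - g' z|) (Measure.pi fun _ : Fin d => ν) :=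
      (Ig.sub Ig').abs
    have heq : (∫⁻ z, ENNReal.ofReal |g z - g' z| ∂(Measure.pi fun _ : Fin d => ν))
        = ENNReal.ofReal (∫ z, |g z - g' z| ∂(Measure.pi fun _ : Fin d => ν)) :=
      (ofReal_integral_eq_lintegral_ofReal Iabs
        (Filter.Eventually.of_forall fun z => abs_nonneg _)).symm
    have hTV : (1/2) * (∫ z, |g z - g' z| ∂(Measure.pi fun _ : Fin d => ν)) ≤ ε := by
      have hp := hL (⟨d, emb, g⟩, ⟨d, emb, g'⟩) (by simp only [SPN.leaves]; exact List.mem_singleton_self _)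
      simpa [SPN.leafTV, Fin.cast_refl] using hp
    rw [hJ, heq, hcard, hnw]
    apply ENNReal.ofReal_le_ofReal
    have hint : (0:ℝ) ≤ ∫ z, |g z - g' z| ∂(Measure.pi fun _ : Fin d => ν) :=
      integral_nonneg fun z => abs_nonneg _
    rcases Nat.eq_zero_or_pos d with hd | hd
    · subst hd
      have hzero : ∀ z : Fin 0 → X, |g z - g' z| = 0 := fun z => by
        rw [density_one_of_dzero hgm hgi z, density_one_of_dzero hg'm hg'i z]; simp
      have hz : (∫ z, |g z - g' z| ∂(Measure.pi fun _ : Fin 0 => ν)) = 0 := by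
        rw [integral_congr_ae (Filter.Eventually.of_forall hzero)]
        simp
      rw [hz]
      positivity
    · have h1d : (1:ℝ) ≤ (d:ℝ) := by exact_mod_cast hd
      have h2 : (∫ z, |g z - g' z| ∂(Measure.pi fun _ : Fin d => ν)) ≤ 2 * ε := by linarith
      nlinarith
  | prod m c c' hss ih =>
    intro hwf hwf' hL hW
    obtain ⟨hm, hwfc, hdisj⟩ := hwf
    obtain ⟨hm', hwfc', hdisj'⟩ := hwf'
    have hzipL : ((SPN.prod m c : SPN n X).leaves).zip ((SPN.prod m c' : SPN n X).leaves)
        = (List.ofFn fun i => ((c i).leaves).zip ((c' i).leaves)).flatten :=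
      zip_flatten_ofFn m _ _ fun i => sameStruct_leaves_length (hss i)
    have hLc : ∀ i, ∀ p ∈ ((c i).leaves).zip ((c' i).leaves), leafTV ν p.1 p.2 ≤ ε := by
      intro i p hp
      apply hL
      rw [show ((SPN.prod m c : SPN n X).leaves).zip ((SPN.prod m c' : SPN n X).leaves) = _
        from hzipL]
      exact List.mem_flatten.mpr ⟨_, List.mem_ofFn.mpr ⟨i, rfl⟩, hp⟩
    have hzipW : ((SPN.prod m c : SPN n X).weightsList).zip ((SPN.prod m c' : SPN n X).weightsList)
        = (List.ofFn fun i => ((c i).weightsList).zip ((c' i).weightsList)).flatten :=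
      zip_flatten_ofFn m _ _ fun i => sameStruct_weights_length (hss i)
    have hWc : ∀ i, ∀ p ∈ ((c i).weightsList).zip ((c' i).weightsList), |p.2 - p.1| ≤ α := by
      intro i p hp
      apply hW
      rw [show ((SPN.prod m c : SPN n X).weightsList).zip
        ((SPN.prod m c' : SPN n X).weightsList) = _ from hzipW]
      exact List.mem_flatten.mpr ⟨_, List.mem_ofFn.mpr ⟨i, rfl⟩, hp⟩
    have hsc' : ∀ i, (c' i).scope = (c i).scope := fun i => sameStruct_scope (hss i)
    set F : Fin m → (Fin n → X) → ℝ := fun i => (c i).density with hF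
    set G : Fin m → (Fin n → X) → ℝ := fun i => (c' i).density with hG
    set H : Fin m → Fin m → (Fin n → X) → ℝ := fun i j x =>
      if j < i then G j x else if j = i then |F j x - G j x| else F j x with hH
    have hHm : ∀ i j, Measurable (H i j) := by
      intro i j
      by_cases h1 : j < i
      · simpa [hH, h1] using measurable_density (hwfc' j)
      · by_cases h2 : j = i
        · simpa [hH, h1, h2]
            using ((measurable_density (hwfc j)).sub (measurable_density (hwfc' j))).abs
        · simpa [hH, h1, h2] using measurable_density (hwfc j)
    have hH0 : ∀ i j x, 0 ≤ H i j x := by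
      intro i j x
      simp only [hH]
      split_ifs
      · exact density_nonneg (hwfc' j) x
      · exact abs_nonneg _
      · exact density_nonneg (hwfc j) x
    have hHD : ∀ i j, DOn ((c j).scope) (H i j) := by
      intro i j x y hxy
      have hFxy : F j x = F j y := dOn_density (c j) x y hxy
      have hGxy : G j x = G j y := by
        apply dOn_density (c' j) x y
        rw [hsc' j]
        exact hxy
      simp only [hH]
      split_ifs
      · exact hGxy
      · rw [hFxy, hGxy]
      · exact hFxy
    have hpt : ∀ x, ENNReal.ofReal
          |(SPN.prod m c : SPN n X).density x - (SPN.prod m c' : SPN n X).density x|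
        ≤ ∑ i, ∏ j, ENNReal.ofReal (H i j x) := by
      intro x
      have h1 : |(SPN.prod m c : SPN n X).density x - (SPN.prod m c' : SPN n X).density x|
          ≤ ∑ i, ∏ j, H i j x := by
        simp only [SPN.density]
        exact abs_prod_sub_prod m (fun i => F i x) (fun i => G i x)
          (fun i => density_nonneg (hwfc i) x) (fun i => density_nonneg (hwfc' i) x)
      calc ENNReal.ofReal
            |(SPN.prod m c : SPN n X).density x - (SPN.prod m c' : SPN n X).density x|
          ≤ ENNReal.ofReal (∑ i, ∏ j, H i j x) := ENNReal.ofReal_le_ofReal h1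
        _ = ∑ i, ∏ j, ENNReal.ofReal (H i j x) := by
            rw [ENNReal.ofReal_sum_of_nonneg
              (fun i _ => Finset.prod_nonneg fun j _ => hH0 i j x)]
            exact Finset.sum_congr rfl fun i _ =>
              ENNReal.ofReal_prod_of_nonneg fun j _ => hH0 i j x
    have hscope : (SPN.prod m c : SPN n X).scope
        = Finset.univ.biUnion (fun i => (c i).scope) := rfl
    calc J ν x₀ (SPN.prod m c : SPN n X).scope
          (fun x => ENNReal.ofReal
            |(SPN.prod m c : SPN n X).density x - (SPN.prod m c' : SPN n X).density x|)
        ≤ J ν x₀ (SPN.prod m c : SPN n X).scope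
            (fun x => ∑ i, ∏ j, ENNReal.ofReal (H i j x)) := J_mono hpt
      _ = ∑ i, J ν x₀ (SPN.prod m c : SPN n X).scope
            (fun x => ∏ j, ENNReal.ofReal (H i j x)) := by
          rw [J]
          exact lintegral_finset_sum _ (fun i _ => by
            have hmeas : Measurable fun y : {a // a ∈ (SPN.prod m c : SPN n X).scope} → X =>
                ∏ j, ENNReal.ofReal (H i j (patch (SPN.prod m c : SPN n X).scope x₀ y)) :=
              Finset.measurable_prod _ fun j _ =>
                ((hHm i j).ennreal_ofReal).comp (measurable_patch _ _)
            exact hmeas)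
      _ ≤ ∑ i, ENNReal.ofReal (2 * ((c i).scope).card * ε + (c i).numWeights * α) := by
          apply Finset.sum_le_sum
          intro i _
          have hsplit : J ν x₀ (SPN.prod m c : SPN n X).scope
              (fun x => ∏ j, ENNReal.ofReal (H i j x))
              = ∏ j, J ν x₀ ((c j).scope) (fun x => ENNReal.ofReal (H i j x)) := by
            rw [hscope]
            exact J_biUnion_prod ν x₀ (fun j => (c j).scope) hdisj
              (fun j x => ENNReal.ofReal (H i j x))
              (fun j => (hHm i j).ennreal_ofReal)
              (fun j => (hHD i j).comp ENNReal.ofReal)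
          rw [hsplit]
          have hone : ∀ j ∈ Finset.univ, j ≠ i →
              J ν x₀ ((c j).scope) (fun x => ENNReal.ofReal (H i j x)) = 1 := by
            intro j _ hj
            rcases lt_or_gt_of_ne hj with hlt | hgt
            · have hHj : (fun x => ENNReal.ofReal (H i j x))
                  = fun x => ENNReal.ofReal ((c' j).density x) := by
                funext x; simp [hH, hG, hlt]
              rw [hHj, show (c j).scope = (c' j).scope from (hsc' j).symm]
              exact J_density_one ν x₀ (hwfc' j)
            · have hHj : (fun x => ENNReal.ofReal (H i j x))
                  = fun x => ENNReal.ofReal ((c j).density x) := by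
                funext x; simp [hH, hF, not_lt_of_gt hgt, ne_of_gt hgt]
              rw [hHj]
              exact J_density_one ν x₀ (hwfc j)
          rw [Finset.prod_eq_single_of_mem i (Finset.mem_univ i) hone]
          have hHi : (fun x => ENNReal.ofReal (H i i x))
              = fun x => ENNReal.ofReal |(c i).density x - (c' i).density x| := by
            funext x; simp [hH, hF, hG]
          rw [hHi]
          exact ih i (hwfc i) (hwfc' i) (hLc i) (hWc i)
      _ = ENNReal.ofReal (∑ i, (2 * (((c i).scope).card : ℝ) * ε + ((c i).numWeights : ℝ) * α)) := by
          rw [ENNReal.ofReal_sum_of_nonneg (fun i _ => by positivity)]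
      _ ≤ ENNReal.ofReal (2 * (SPN.prod m c : SPN n X).scope.card * ε
            + (SPN.prod m c : SPN n X).numWeights * α) := by
          apply ENNReal.ofReal_le_ofReal
          have hcard : (SPN.prod m c : SPN n X).scope.card = ∑ i, ((c i).scope).card := by
            rw [hscope]
            exact Finset.card_biUnion fun i _ j _ hij => hdisj i j hij
          have hnw : (SPN.prod m c : SPN n X).numWeights = ∑ i, (c i).numWeights := rfl
          rw [hcard, hnw]
          push_cast
          rw [Finset.sum_add_distrib, ← Finset.sum_mul, ← Finset.sum_mul, ← Finset.mul_sum]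
  | sum m w w' c c' hss ih =>
    intro hwf hwf' hL hW
    obtain ⟨hm, hwfc, hsceq, hw0, hw1⟩ := hwf
    obtain ⟨hm', hwfc', hsceq', hw'0, hw'1⟩ := hwf'
    have hzipL : ((SPN.sum m w c : SPN n X).leaves).zip ((SPN.sum m w' c' : SPN n X).leaves)
        = (List.ofFn fun i => ((c i).leaves).zip ((c' i).leaves)).flatten :=
      zip_flatten_ofFn m _ _ fun i => sameStruct_leaves_length (hss i)
    have hLc : ∀ i, ∀ p ∈ ((c i).leaves).zip ((c' i).leaves), leafTV ν p.1 p.2 ≤ ε := by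
      intro i p hp
      apply hL
      rw [show ((SPN.sum m w c : SPN n X).leaves).zip ((SPN.sum m w' c' : SPN n X).leaves) = _
        from hzipL]
      exact List.mem_flatten.mpr ⟨_, List.mem_ofFn.mpr ⟨i, rfl⟩, hp⟩
    have hzipW : ((SPN.sum m w c : SPN n X).weightsList).zip
          ((SPN.sum m w' c' : SPN n X).weightsList)
        = ((List.ofFn fun i => w i).zip (List.ofFn fun i => w' i))
          ++ (List.ofFn fun i => ((c i).weightsList).zip ((c' i).weightsList)).flatten := by
      show ((List.ofFn fun i => w i) ++ (List.ofFn fun i => (c i).weightsList).flatten).zip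
          ((List.ofFn fun i => w' i) ++ (List.ofFn fun i => (c' i).weightsList).flatten) = _
      rw [List.zip_append (by simp),
        zip_flatten_ofFn m _ _ fun i => sameStruct_weights_length (hss i)]
    have hwi : ∀ i, |w' i - w i| ≤ α := by
      intro i
      have := hW (w i, w' i) (by
        rw [hzipW]; exact List.mem_append_left _ (mem_zip_ofFn w w' i))
      simpa using this
    have hWc : ∀ i, ∀ p ∈ ((c i).weightsList).zip ((c' i).weightsList), |p.2 - p.1| ≤ α := by
      intro i p hp
      apply hW
      rw [hzipW]
      exact List.mem_append_right _ (List.mem_flatten.mpr ⟨_, List.mem_ofFn.mpr ⟨i, rfl⟩, hp⟩)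
    have hsc' : ∀ i, (c' i).scope = (c i).scope := fun i => sameStruct_scope (hss i)
    have hSi : ∀ i, (c i).scope = (SPN.sum m w c : SPN n X).scope :=
      fun i => scope_sum_child hm hsceq i
    have hpt : ∀ x, ENNReal.ofReal
          |(SPN.sum m w c : SPN n X).density x - (SPN.sum m w' c' : SPN n X).density x|
        ≤ ∑ i, (ENNReal.ofReal (w i) * ENNReal.ofReal |(c i).density x - (c' i).density x|
              + ENNReal.ofReal |w' i - w i| * ENNReal.ofReal ((c' i).density x)) := by
      intro x
      have h1 : |(SPN.sum m w c : SPN n X).density x - (SPN.sum m w' c' : SPN n X).density x|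
          ≤ ∑ i, (w i * |(c i).density x - (c' i).density x|
              + |w' i - w i| * (c' i).density x) := by
        simp only [SPN.density]
        rw [← Finset.sum_sub_distrib]
        refine le_trans (Finset.abs_sum_le_sum_abs _ _) (Finset.sum_le_sum fun i _ => ?_)
        have hsplit : w i * (c i).density x - w' i * (c' i).density x
            = w i * ((c i).density x - (c' i).density x)
              + (w i - w' i) * (c' i).density x := by ring
        rw [hsplit]
        refine le_trans (abs_add_le _ _) ?_
        rw [abs_mul, abs_mul, abs_of_nonneg (hw0 i),
          abs_of_nonneg (density_nonneg (hwfc' i) x), abs_sub_comm (w i)]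
      calc ENNReal.ofReal
            |(SPN.sum m w c : SPN n X).density x - (SPN.sum m w' c' : SPN n X).density x|
          ≤ ENNReal.ofReal (∑ i, (w i * |(c i).density x - (c' i).density x|
              + |w' i - w i| * (c' i).density x)) := ENNReal.ofReal_le_ofReal h1
        _ = ∑ i, (ENNReal.ofReal (w i) * ENNReal.ofReal |(c i).density x - (c' i).density x|
              + ENNReal.ofReal |w' i - w i| * ENNReal.ofReal ((c' i).density x)) := by
            rw [ENNReal.ofReal_sum_of_nonneg (fun i _ =>
              add_nonneg (mul_nonneg (hw0 i) (abs_nonneg _))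
                (mul_nonneg (abs_nonneg _) (density_nonneg (hwfc' i) x)))]
            refine Finset.sum_congr rfl fun i _ => ?_
            rw [ENNReal.ofReal_add (mul_nonneg (hw0 i) (abs_nonneg _))
              (mul_nonneg (abs_nonneg _) (density_nonneg (hwfc' i) x)),
              ENNReal.ofReal_mul (hw0 i), ENNReal.ofReal_mul (abs_nonneg _)]
    calc J ν x₀ (SPN.sum m w c : SPN n X).scope
          (fun x => ENNReal.ofReal
            |(SPN.sum m w c : SPN n X).density x - (SPN.sum m w' c' : SPN n X).density x|)
        ≤ J ν x₀ (SPN.sum m w c : SPN n X).scope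
            (fun x => ∑ i, (ENNReal.ofReal (w i)
                * ENNReal.ofReal |(c i).density x - (c' i).density x|
              + ENNReal.ofReal |w' i - w i| * ENNReal.ofReal ((c' i).density x))) :=
          J_mono hpt
      _ = ∑ i, (ENNReal.ofReal (w i) * J ν x₀ (SPN.sum m w c : SPN n X).scope
              (fun x => ENNReal.ofReal |(c i).density x - (c' i).density x|)
            + ENNReal.ofReal |w' i - w i| * J ν x₀ (SPN.sum m w c : SPN n X).scope
              (fun x => ENNReal.ofReal ((c' i).density x))) := by
          rw [J, lintegral_finset_sum _ (fun i _ => by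
            exact Measurable.add
              (measurable_const.mul
                ((((measurable_density (hwfc i)).sub
                  (measurable_density (hwfc' i))).abs.ennreal_ofReal).comp
                  (measurable_patch _ _)))
              (measurable_const.mul
                (((measurable_density (hwfc' i)).ennreal_ofReal).comp (measurable_patch _ _))))]
          refine Finset.sum_congr rfl fun i _ => ?_
          rw [lintegral_add_left (by
            exact measurable_const.mul
              ((((measurable_density (hwfc i)).sub
                (measurable_density (hwfc' i))).abs.ennreal_ofReal).comp
                (measurable_patch _ _)))]
          rw [lintegral_const_mul' _ _ ENNReal.ofReal_ne_top,
            lintegral_const_mul' _ _ ENNReal.ofReal_ne_top]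
          rfl
      _ ≤ ∑ i, (ENNReal.ofReal (w i) * ENNReal.ofReal
              (2 * ((SPN.sum m w c : SPN n X).scope.card : ℝ) * ε + ((c i).numWeights : ℝ) * α)
            + ENNReal.ofReal |w' i - w i| * 1) := by
          apply Finset.sum_le_sum
          intro i _
          have hJi := ih i (hwfc i) (hwfc' i) (hLc i) (hWc i)
          rw [hSi i] at hJi
          have hJG : J ν x₀ (SPN.sum m w c : SPN n X).scope
              (fun x => ENNReal.ofReal ((c' i).density x)) = 1 := by
            rw [show (SPN.sum m w c : SPN n X).scope = (c' i).scope from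
              ((hsc' i).trans (hSi i)).symm]
            exact J_density_one ν x₀ (hwfc' i)
          rw [hJG]
          exact add_le_add (mul_le_mul_right hJi _) le_rfl
      _ = ENNReal.ofReal (∑ i, (w i
            * (2 * ((SPN.sum m w c : SPN n X).scope.card : ℝ) * ε + ((c i).numWeights : ℝ) * α)
            + |w' i - w i|)) := by
          rw [ENNReal.ofReal_sum_of_nonneg (fun i _ =>
            add_nonneg (mul_nonneg (hw0 i) (by positivity)) (abs_nonneg _))]
          refine Finset.sum_congr rfl fun i _ => ?_
          rw [mul_one, ← ENNReal.ofReal_mul (hw0 i),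
            ← ENNReal.ofReal_add (mul_nonneg (hw0 i) (by positivity)) (abs_nonneg _)]
      _ ≤ ENNReal.ofReal (2 * ((SPN.sum m w c : SPN n X).scope.card : ℝ) * ε
            + ((SPN.sum m w c : SPN n X).numWeights : ℝ) * α) := by
          apply ENNReal.ofReal_le_ofReal
          have hnw : (SPN.sum m w c : SPN n X).numWeights = m + ∑ i, (c i).numWeights := rfl
          rw [hnw]
          have hwle1 : ∀ i, w i ≤ 1 := fun i =>
            hw1 ▸ Finset.single_le_sum (fun j _ => hw0 j) (Finset.mem_univ i)
          set cS : ℝ := ((SPN.sum m w c : SPN n X).scope.card : ℝ) with hcS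
          have hcS0 : 0 ≤ cS := Nat.cast_nonneg _
          calc ∑ i, (w i * (2 * cS * ε + ((c i).numWeights : ℝ) * α) + |w' i - w i|)
              ≤ ∑ i, (w i * (2 * cS * ε) + (((c i).numWeights : ℝ) * α + α)) := by
                apply Finset.sum_le_sum
                intro i _
                have h1 : w i * (2 * cS * ε + ((c i).numWeights : ℝ) * α)
                    = w i * (2 * cS * ε) + w i * (((c i).numWeights : ℝ) * α) := by ring
                have h2 : w i * (((c i).numWeights : ℝ) * α) ≤ ((c i).numWeights : ℝ) * α := by
                  have : 0 ≤ ((c i).numWeights : ℝ) * α :=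
                    mul_nonneg (Nat.cast_nonneg _) hα
                  nlinarith [hwle1 i, hw0 i]
                have h3 := hwi i
                linarith
            _ = (∑ i, w i) * (2 * cS * ε)
                + ((∑ i, ((c i).numWeights : ℝ)) * α + m * α) := by
                rw [Finset.sum_add_distrib, ← Finset.sum_mul, Finset.sum_add_distrib,
                  ← Finset.sum_mul, Finset.sum_const, Finset.card_univ, Fintype.card_fin,
                  nsmul_eq_mul]
            _ = 2 * cS * ε + ((m : ℝ) + ∑ i, ((c i).numWeights : ℝ)) * α := by
                rw [hw1, one_mul]; ring
            _ = 2 * cS * ε + ((m + ∑ i, (c i).numWeights : ℕ) : ℝ) * α := by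
                push_cast; ring

end SPNAux

/-- Let `f` and `fh` be probability densities represented by two
tree-structured SPNs over an `n`-dimensional product domain that have the same structure,
with `k` mixing weights in total.  If `ε, α ∈ [0,1]`, every pair of corresponding leaves is
`ε`-close in total variation distance and every pair of corresponding mixing weights differs
by at most `α`, then `TV(f, f̂) ≤ n ε + k α / 2`. -/
theorem stmt4 {n : ℕ} {X : Type} [MeasurableSpace X] (ν : Measure X) [SigmaFinite ν]
    (f fh : SPN n X) (hf : f.WF ν) (hfh : fh.WF ν)
    (hscope : f.scope = Finset.univ) (hstruct : SPN.SameStruct f fh)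
    (k : ℕ) (hk : f.numWeights = k)
    (ε α : ℝ) (hε : ε ∈ Set.Icc (0:ℝ) 1) (hα : α ∈ Set.Icc (0:ℝ) 1)
    (hleaf : ∀ i, i < f.leaves.length → SPN.leafTV ν (f.leaves[i]!) (fh.leaves[i]!) ≤ ε)
    (hw : ∀ j, j < f.weightsList.length →
      |fh.weightsList[j]! - f.weightsList[j]!| ≤ α) :
    SPN.tv ν f.density fh.density ≤ n * ε + k * α / 2 := by
  classical
  obtain ⟨hε0, hε1⟩ := hε
  obtain ⟨hα0, hα1⟩ := hα
  have hRHS0 : 0 ≤ (n:ℝ) * ε + (k:ℝ) * α / 2 := by positivity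
  by_cases hne : Nonempty (Fin n → X)
  · obtain ⟨x₀⟩ := hne
    have hlenL : f.leaves.length = fh.leaves.length := SPNAux.sameStruct_leaves_length hstruct
    have hlenW : f.weightsList.length = fh.weightsList.length :=
      SPNAux.sameStruct_weights_length hstruct
    have hLz : ∀ p ∈ f.leaves.zip fh.leaves, SPN.leafTV ν p.1 p.2 ≤ ε := by
      intro p hp
      obtain ⟨i, hi, hpe⟩ := List.mem_iff_getElem.mp hp
      have hi1 : i < f.leaves.length := by
        rw [List.length_zip] at hi
        exact lt_of_lt_of_le hi (min_le_left _ _)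
      have hi2 : i < fh.leaves.length := hlenL ▸ hi1
      have h := hleaf i hi1
      rw [getElem!_pos f.leaves i hi1, getElem!_pos fh.leaves i hi2] at h
      rw [← hpe, List.getElem_zip]
      exact h
    have hWz : ∀ p ∈ f.weightsList.zip fh.weightsList, |p.2 - p.1| ≤ α := by
      intro p hp
      obtain ⟨i, hi, hpe⟩ := List.mem_iff_getElem.mp hp
      have hi1 : i < f.weightsList.length := by
        rw [List.length_zip] at hi
        exact lt_of_lt_of_le hi (min_le_left _ _)
      have hi2 : i < fh.weightsList.length := hlenW ▸ hi1
      have h := hw i hi1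
      rw [getElem!_pos f.weightsList i hi1, getElem!_pos fh.weightsList i hi2] at h
      rw [← hpe, List.getElem_zip]
      exact h
    have hmain := SPNAux.main_bound ν x₀ hε0 hα0 hstruct hf hfh hLz hWz
    rw [hscope, hk] at hmain
    have hJuniv : ∀ φ : (Fin n → X) → ENNReal,
        SPNAux.J ν x₀ Finset.univ φ = ∫⁻ x, φ x ∂(Measure.pi fun _ : Fin n => ν) := by
      intro φ
      let e : {i // i ∈ (Finset.univ : Finset (Fin n))} ≃ Fin n :=
        Equiv.subtypeUnivEquiv (fun i => Finset.mem_univ i)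
      have MP : MeasurePreserving (⇑(MeasurableEquiv.piCongrLeft (fun _ : Fin n => X) e))
          (Measure.pi fun _ : {i // i ∈ (Finset.univ : Finset (Fin n))} => ν)
          (Measure.pi fun _ : Fin n => ν) := measurePreserving_piCongrLeft (fun _ => ν) e
      rw [SPNAux.J,
        ← MP.lintegral_comp_emb (MeasurableEquiv.piCongrLeft _ e).measurableEmbedding]
      apply lintegral_congr
      intro y
      congr 1
      funext i
      have h1 : SPNAux.patch Finset.univ x₀ y i = y ⟨i, Finset.mem_univ i⟩ := by
        simp [SPNAux.patch]
      rw [h1]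
      exact (Equiv.piCongrLeft_apply_apply (fun _ => X) e y ⟨i, Finset.mem_univ i⟩).symm
    rw [hJuniv] at hmain
    have hcard : (Finset.univ : Finset (Fin n)).card = n := by simp
    rw [hcard] at hmain
    rw [SPN.tv]
    by_cases hint : Integrable (fun x => |f.density x - fh.density x|)
        (Measure.pi fun _ : Fin n => ν)
    · have h1 : ENNReal.ofReal
          (∫ x, |f.density x - fh.density x| ∂(Measure.pi fun _ : Fin n => ν))
          = ∫⁻ x, ENNReal.ofReal |f.density x - fh.density x|
            ∂(Measure.pi fun _ : Fin n => ν) :=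
        ofReal_integral_eq_lintegral_ofReal hint
          (Filter.Eventually.of_forall fun x => abs_nonneg _)
      have h2 : ENNReal.ofReal
          (∫ x, |f.density x - fh.density x| ∂(Measure.pi fun _ : Fin n => ν))
          ≤ ENNReal.ofReal (2 * (n:ℝ) * ε + (k:ℝ) * α) := by
        rw [h1]; exact hmain
      have h3 : (∫ x, |f.density x - fh.density x| ∂(Measure.pi fun _ : Fin n => ν))
          ≤ 2 * (n:ℝ) * ε + (k:ℝ) * α :=
        (ENNReal.ofReal_le_ofReal_iff (by positivity)).mp h2
      linarith
    · rw [integral_undef hint, mul_zero]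
      exact hRHS0
  · have hie : IsEmpty (Fin n → X) := not_nonempty_iff.mp hne
    have hz : (Measure.pi fun _ : Fin n => ν) = 0 := Measure.eq_zero_of_isEmpty _
    rw [SPN.tv, hz, integral_zero_measure, mul_zero]
    exact hRHS0
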